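/- Fix n ≥ 1 and positive reals Δ₁,…,Δ_n. For integers N₁,…,N_n with each N_i ≥ 2, set Δ̄_i = Δ_i/N_i, N = N₁⋯N_n, and let U_n(N₁,…,N_n) be the n×n matrix with [U_n]_{i,i} = N·(N_i+1)(2N_i+1)/6·Δ̄_i² and [U_n]_{i,j} = N·(N_i+1)(N_j+1)/4·Δ̄_iΔ̄_j for i ≠ j. Then, as all N₁,…,N_n tend to infinity (along the product/atTop filter on the multi-index (N₁,…,N_n)), the matrix N · U_n(N₁,…,N_n)⁻¹ converges to the matrix L_n ∈ ℝ^{n×n} with diagonal entries [L_n]_{i,i} = 12(3n−2)/(Δ_i²(3n+1)) and off-diagonal entries [L_n]_{i,j} = −36/(Δ_iΔ_j(3n+1)) for i ≠ j. -/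

import Mathlib

open scoped BigOperators
open Filter Matrix

private lemma smul_inv_aux {n : ℕ} (hn : 1 ≤ n) (c : ℝ) (hc : c ≠ 0)
    (A : Matrix (Fin n) (Fin n) ℝ) : (c • A)⁻¹ = c⁻¹ • A⁻¹ := by
  obtain ⟨m, hm⟩ : ∃ m, Fintype.card (Fin n) = m + 1 := ⟨n - 1, by simp; omega⟩
  rw [Matrix.inv_def, Matrix.inv_def, Matrix.det_smul, Matrix.adjugate_smul,
    Ring.inverse_eq_inv', smul_smul, smul_smul, hm, Nat.add_sub_cancel, pow_succ]
  congr 1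
  have hp : (c : ℝ) ^ m ≠ 0 := pow_ne_zero _ hc
  rw [mul_inv, mul_inv]
  calc (c ^ m)⁻¹ * c⁻¹ * A.det⁻¹ * c ^ m
      = c⁻¹ * A.det⁻¹ * ((c ^ m)⁻¹ * c ^ m) := by ring
    _ = c⁻¹ * A.det⁻¹ := by rw [inv_mul_cancel₀ hp, mul_one]

private lemma key_mul (n : ℕ) (Δ : Fin n → ℝ) (hΔ : ∀ i, 0 < Δ i) :
    (Matrix.of fun i j : Fin n => if i = j then Δ i ^ 2 / 3 else Δ i * Δ j / 4) *
      (Matrix.of fun i j : Fin n =>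
        if i = j then 12 * (3 * (n : ℝ) - 2) / ((Δ i) ^ 2 * (3 * (n : ℝ) + 1))
        else -36 / (Δ i * Δ j * (3 * (n : ℝ) + 1))) = 1 := by
  have hs : 3 * (n : ℝ) + 1 ≠ 0 := by positivity
  ext i k
  rw [Matrix.mul_apply]
  simp only [Matrix.of_apply, Matrix.one_apply]
  by_cases hik : i = k
  · subst hik
    have h1 : ∀ j : Fin n,
        (if i = j then Δ i ^ 2 / 3 else Δ i * Δ j / 4) *
          (if j = i then 12 * (3 * (n : ℝ) - 2) / ((Δ j) ^ 2 * (3 * (n : ℝ) + 1))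
            else -36 / (Δ j * Δ i * (3 * (n : ℝ) + 1))) =
        (-9) / (3 * (n : ℝ) + 1) +
          (if i = j then 4 * (3 * (n : ℝ) - 2) / (3 * (n : ℝ) + 1) + 9 / (3 * (n : ℝ) + 1)
            else 0) := by
      intro j
      have hj := (hΔ j).ne'
      have hi := (hΔ i).ne'
      split_ifs with u1 u2 u3
      · subst u1
        field_simp
        ring
      · exact absurd u1.symm u2
      · exact absurd u3.symm u1
      · field_simp
        ring
    rw [Finset.sum_congr rfl fun j _ => h1 j, Finset.sum_add_distrib, Finset.sum_const,
      Finset.sum_ite_eq Finset.univ i, if_pos (Finset.mem_univ i), if_pos rfl]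
    simp only [Finset.card_univ, Fintype.card_fin, nsmul_eq_mul]
    field_simp
    ring
  · have h2 : ∀ j : Fin n,
        (if i = j then Δ i ^ 2 / 3 else Δ i * Δ j / 4) *
          (if j = k then 12 * (3 * (n : ℝ) - 2) / ((Δ j) ^ 2 * (3 * (n : ℝ) + 1))
            else -36 / (Δ j * Δ k * (3 * (n : ℝ) + 1))) =
        (-9) * Δ i / (Δ k * (3 * (n : ℝ) + 1)) +
          (if i = j then (-3) * Δ i / (Δ k * (3 * (n : ℝ) + 1)) else 0) +
          (if j = k then (9 * (n : ℝ) + 3) * Δ i / (Δ k * (3 * (n : ℝ) + 1)) else 0) := by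
      intro j
      have hk := (hΔ k).ne'
      have hi := (hΔ i).ne'
      have hj := (hΔ j).ne'
      split_ifs with u1 u2 u3
      · exact absurd (u1.trans u2) hik
      · subst u1
        field_simp
        ring
      · subst u3
        field_simp
        ring
      · field_simp
        ring
    rw [Finset.sum_congr rfl fun j _ => h2 j, Finset.sum_add_distrib, Finset.sum_add_distrib,
      Finset.sum_const, Finset.sum_ite_eq Finset.univ i, Finset.sum_ite_eq' Finset.univ k,
      if_pos (Finset.mem_univ i), if_pos (Finset.mem_univ k), if_neg hik]
    have hk := (hΔ k).ne'
    have hi := (hΔ i).ne'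
    simp only [Finset.card_univ, Fintype.card_fin, nsmul_eq_mul]
    field_simp
    ring

/-- Proposition 3.4 of the paper: as all `Nᵢ → ∞` (along `atTop` on the
multi-index `(N₁,…,Nₙ)` with the product order), `N · Uₙ⁻¹` converges to the
matrix `Lₙ` with `[Lₙ]ᵢᵢ = 12(3n−2)/(Δᵢ²(3n+1))` and
`[Lₙ]ᵢⱼ = −36/(ΔᵢΔⱼ(3n+1))` for `i ≠ j`. -/
theorem lim_N_smul_Un_inv
    (n : ℕ) (hn : 1 ≤ n)
    (Δ : Fin n → ℝ) (hΔ : ∀ i, 0 < Δ i) :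
    Filter.Tendsto
      (fun Nv : Fin n → ℕ =>
        (∏ l, (Nv l : ℝ)) •
          (Matrix.of fun i j : Fin n =>
            if i = j then
              (∏ l, (Nv l : ℝ)) * (((Nv i : ℝ) + 1) * (2 * (Nv i : ℝ) + 1) / 6)
                * (Δ i / (Nv i : ℝ)) ^ 2
            else
              (∏ l, (Nv l : ℝ)) * (((Nv i : ℝ) + 1) * ((Nv j : ℝ) + 1) / 4)
                * ((Δ i / (Nv i : ℝ)) * (Δ j / (Nv j : ℝ))))⁻¹)
      Filter.atTop
      (nhds (Matrix.of fun i j : Fin n =>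
        if i = j then 12 * (3 * (n : ℝ) - 2) / ((Δ i) ^ 2 * (3 * (n : ℝ) + 1))
        else -36 / (Δ i * Δ j * (3 * (n : ℝ) + 1)))) := by
  set L : Matrix (Fin n) (Fin n) ℝ := Matrix.of fun i j : Fin n =>
    if i = j then 12 * (3 * (n : ℝ) - 2) / ((Δ i) ^ 2 * (3 * (n : ℝ) + 1))
    else -36 / (Δ i * Δ j * (3 * (n : ℝ) + 1)) with hL
  set M : Matrix (Fin n) (Fin n) ℝ := Matrix.of fun i j : Fin n =>
    if i = j then Δ i ^ 2 / 3 else Δ i * Δ j / 4 with hM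
  have hkey : M * L = 1 := key_mul n Δ hΔ
  have hdet : IsUnit M.det := Matrix.isUnit_det_of_right_inverse hkey
  have hMinv : M⁻¹ = L := Matrix.inv_eq_right_inv hkey
  -- the normalized matrix
  set g : (Fin n → ℕ) → Matrix (Fin n) (Fin n) ℝ := fun Nv => Matrix.of fun i j : Fin n =>
    if i = j then (((Nv i : ℝ) + 1) * (2 * (Nv i : ℝ) + 1) / 6) * (Δ i / (Nv i : ℝ)) ^ 2
    else (((Nv i : ℝ) + 1) * ((Nv j : ℝ) + 1) / 4) * ((Δ i / (Nv i : ℝ)) * (Δ j / (Nv j : ℝ)))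
    with hg
  -- each coordinate tends to infinity
  have hinv : ∀ i : Fin n, Filter.Tendsto (fun Nv : Fin n → ℕ => ((Nv i : ℝ))⁻¹)
      Filter.atTop (nhds 0) := by
    intro i
    have h1 : Filter.Tendsto (fun Nv : Fin n → ℕ => Nv i) Filter.atTop Filter.atTop := by
      refine Filter.tendsto_atTop_atTop.2 fun b => ⟨fun _ => b, fun x hx => hx i⟩
    exact tendsto_inv_atTop_zero.comp (tendsto_natCast_atTop_atTop.comp h1)
  have hone : ∀ᶠ Nv : Fin n → ℕ in Filter.atTop, ∀ l, 1 ≤ Nv l := by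
    refine Filter.eventually_atTop.2 ⟨fun _ => 1, fun x hx l => hx l⟩
  -- convergence of g to M
  have hgM : Filter.Tendsto g Filter.atTop (nhds M) := by
    refine tendsto_pi_nhds.2 fun i => tendsto_pi_nhds.2 fun j => ?_
    by_cases hij : i = j
    · subst hij
      simp only [hg, hM, Matrix.of_apply, if_pos rfl]
      have hlim : Filter.Tendsto
          (fun Nv : Fin n → ℕ => (1 + ((Nv i : ℝ))⁻¹) * (2 + ((Nv i : ℝ))⁻¹) / 6 * Δ i ^ 2)
          Filter.atTop (nhds ((1 + 0) * (2 + 0) / 6 * Δ i ^ 2)) := by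
        exact ((((tendsto_const_nhds.add (hinv i)).mul
          (tendsto_const_nhds.add (hinv i))).div_const 6).mul tendsto_const_nhds)
      have hval : (1 + (0:ℝ)) * (2 + 0) / 6 * Δ i ^ 2 = Δ i ^ 2 / 3 := by ring
      rw [hval] at hlim
      refine hlim.congr' ?_
      filter_upwards [hone] with Nv hNv
      have hx : ((Nv i : ℝ)) ≠ 0 := by
        have := hNv i
        positivity
      field_simp
      rw [if_pos trivial, mul_div_cancel₀ _ (show ((Nv i : ℝ)) ^ 2 * 6 ≠ 0 by positivity)]
    · simp only [hg, hM, Matrix.of_apply, if_neg hij]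
      have hlim : Filter.Tendsto
          (fun Nv : Fin n → ℕ =>
            (1 + ((Nv i : ℝ))⁻¹) * (1 + ((Nv j : ℝ))⁻¹) / 4 * (Δ i * Δ j))
          Filter.atTop (nhds ((1 + 0) * (1 + 0) / 4 * (Δ i * Δ j))) := by
        exact ((((tendsto_const_nhds.add (hinv i)).mul
          (tendsto_const_nhds.add (hinv j))).div_const 4).mul tendsto_const_nhds)
      have hval : (1 + (0:ℝ)) * (1 + 0) / 4 * (Δ i * Δ j) = Δ i * Δ j / 4 := by ring
      rw [hval] at hlim
      refine hlim.congr' ?_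
      filter_upwards [hone] with Nv hNv
      have hx : ((Nv i : ℝ)) ≠ 0 := by have := hNv i; positivity
      have hy : ((Nv j : ℝ)) ≠ 0 := by have := hNv j; positivity
      field_simp
  -- continuity of inversion at M
  have hcont : ContinuousAt Inv.inv M := by
    refine continuousAt_matrix_inv M ?_
    rw [Ring.inverse_eq_inv']
    exact continuousAt_inv₀ hdet.ne_zero
  have hginv : Filter.Tendsto (fun Nv => (g Nv)⁻¹) Filter.atTop (nhds L) := by
    have := hcont.tendsto.comp hgM
    rwa [Function.comp_def, hMinv] at this
  refine hginv.congr' ?_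
  filter_upwards [hone] with Nv hNv
  have hNl : ∀ l, ((Nv l : ℝ)) ≠ 0 := fun l => by have := hNv l; positivity
  have hN : (∏ l, (Nv l : ℝ)) ≠ 0 := Finset.prod_ne_zero_iff.2 fun l _ => hNl l
  have hU : (Matrix.of fun i j : Fin n =>
      if i = j then
        (∏ l, (Nv l : ℝ)) * (((Nv i : ℝ) + 1) * (2 * (Nv i : ℝ) + 1) / 6)
          * (Δ i / (Nv i : ℝ)) ^ 2
      else
        (∏ l, (Nv l : ℝ)) * (((Nv i : ℝ) + 1) * ((Nv j : ℝ) + 1) / 4)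
          * ((Δ i / (Nv i : ℝ)) * (Δ j / (Nv j : ℝ)))) = (∏ l, (Nv l : ℝ)) • g Nv := by
    ext i j
    simp only [hg, Matrix.smul_apply, Matrix.of_apply, smul_eq_mul]
    by_cases hij : i = j
    · simp only [if_pos hij]; ring
    · simp only [if_neg hij]; ring
  rw [hU, smul_inv_aux hn _ hN, smul_smul, mul_inv_cancel₀ hN, one_smul]
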